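/- Let Φ = B_n or C_n realized in ℝⁿ, with positive roots Φ⁺ = {ε_i − ε_j, ε_i + ε_j : i < j} ∪ {ε_i} (type B) or ∪ {2ε_i} (type C). Let μ = (μ_1,…,μ_n) ∈ ℤⁿ with μ_1 ≤ μ_2 ≤ … ≤ μ_n ≤ 0 (an integral antidominant weight), let w ∈ W_n act on ℝⁿ by w·ε_{n+1−k} = sgn(w(k))·ε_{n+1−|w(k)|}, and set λ = wμ. Assume that for every α ∈ Φ⁺: ⟨λ, α∨⟩ > 0 if and only if w⁻¹α ∈ −Φ⁺ (equivalently, λ lies in the upper closure of the chamber wC∘, equivalently w ∈ W^J). Then p(λ⁻) = p(⁻w⃗). -/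
import Mathlib


/-- Greene invariant `c_k(x)` of the length-`N` sequence `x` (positions `1,…,N`). -/
noncomputable def greeneC {α : Type*} [LinearOrder α] (N : ℕ) (x : ℕ → α) (k : ℕ) : ℕ :=
  sSup {m : ℕ | ∃ S : Finset ℕ, (∀ i ∈ S, 1 ≤ i ∧ i ≤ N) ∧ m = S.card ∧
    ∃ f : ℕ → Fin k, ∀ i ∈ S, ∀ j ∈ S, i < j → f i = f j → x i ≤ x j}

/-- The Robinson–Schensted shape of `x`, via Greene's theorem:
`p(x)_k = c_k(x) − c_{k−1}(x)`. -/
noncomputable def rsShape {α : Type*} [LinearOrder α] (N : ℕ) (x : ℕ → α) (k : ℕ) : ℕ :=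
  greeneC N x k - greeneC N x (k - 1)

/-- `w` is an element of the group `W_n` of signed permutations. -/
def IsSignedPerm (n : ℕ) (w : Equiv.Perm ℤ) : Prop :=
  (∀ i : ℤ, w (-i) = -w i) ∧ ∀ i : ℤ, 1 ≤ i → i ≤ (n : ℤ) → 1 ≤ |w i| ∧ |w i| ≤ (n : ℤ)

/-- The action of `w ∈ W_n` on `ℝⁿ` determined by
`w·ε_{n+1−k} = sgn(w(k))·ε_{n+1−|w(k)|}` for `1 ≤ k ≤ n`. -/
def act (n : ℕ) (w : Equiv.Perm ℤ) (v : ℕ → ℝ) : ℕ → ℝ := fun m =>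
  ∑ k ∈ Finset.Icc 1 n,
    if n + 1 - (w (k : ℤ)).natAbs = m then (Int.sign (w (k : ℤ)) : ℝ) * v (n + 1 - k) else 0

/-- For a length-`n` sequence `x` (positions `1,…,n`), the length-`2n` sequence
`x⁻ = (x_1,…,x_n,−x_n,…,−x_1)` (positions `1,…,2n`). -/
def supMinus (n : ℕ) (x : ℕ → ℝ) : ℕ → ℝ := fun i =>
  if i ≤ n then x i else -x (2 * n + 1 - i)

/-- For a length-`n` sequence `x` (positions `1,…,n`), the length-`2n` sequence
`⁻x = (−x_n,…,−x_1,x_1,…,x_n)` (positions `1,…,2n`). -/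
def preMinus (n : ℕ) (x : ℕ → ℤ) : ℕ → ℤ := fun i =>
  if i ≤ n then -x (n + 1 - i) else x (i - n)

/-- The standard basis vector `ε_i` of `ℝⁿ` (coordinates indexed `1,…,n`). -/
def eps (i : ℕ) : ℕ → ℝ := fun m => if m = i then 1 else 0

/-- The positive roots of `B_n`: `ε_i − ε_j, ε_i + ε_j (i < j)` and `ε_i`. -/
def PosB (n : ℕ) : Set (ℕ → ℝ) :=
  {α | ∃ i j, 1 ≤ i ∧ i < j ∧ j ≤ n ∧ (α = eps i - eps j ∨ α = eps i + eps j)} ∪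
    {α | ∃ i, 1 ≤ i ∧ i ≤ n ∧ α = eps i}

/-- The positive roots of `C_n`: `ε_i − ε_j, ε_i + ε_j (i < j)` and `2ε_i`. -/
def PosC (n : ℕ) : Set (ℕ → ℝ) :=
  {α | ∃ i j, 1 ≤ i ∧ i < j ∧ j ≤ n ∧ (α = eps i - eps j ∨ α = eps i + eps j)} ∪
    {α | ∃ i, 1 ≤ i ∧ i ≤ n ∧ α = (2 : ℝ) • eps i}

/-- The standard bilinear form on `ℝⁿ` (coordinates indexed `1,…,n`). -/
def formR (n : ℕ) (x y : ℕ → ℝ) : ℝ := ∑ m ∈ Finset.Icc 1 n, x m * y m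


/-- signed index of position `p ∈ [1,2n]` -/
def tOf (n p : ℕ) : ℤ := if p ≤ n then (p : ℤ) - n - 1 else (p : ℤ) - n

/-- position of signed index `t ∈ ±[1,n]` -/
def posOf (n : ℕ) (t : ℤ) : ℕ := if 0 < t then n + t.toNat else (n + 1 + t).toNat

lemma tOf_ne (n p : ℕ) (h1 : 1 ≤ p) (h2 : p ≤ 2 * n) : tOf n p ≠ 0 := by
  unfold tOf; split <;> omega

lemma tOf_natAbs (n p : ℕ) (h1 : 1 ≤ p) (h2 : p ≤ 2 * n) : (tOf n p).natAbs ≤ n := by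
  unfold tOf; split <;> omega

lemma posOf_mem (n : ℕ) (t : ℤ) (h1 : t ≠ 0) (h2 : t.natAbs ≤ n) :
    1 ≤ posOf n t ∧ posOf n t ≤ 2 * n := by
  unfold posOf; split <;> omega

lemma tOf_posOf (n : ℕ) (t : ℤ) (h1 : t ≠ 0) (h2 : t.natAbs ≤ n) : tOf n (posOf n t) = t := by
  unfold tOf posOf; split <;> split <;> omega

lemma posOf_tOf (n p : ℕ) (h1 : 1 ≤ p) (h2 : p ≤ 2 * n) : posOf n (tOf n p) = p := by
  unfold tOf posOf; split <;> split <;> omega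

lemma posOf_lt (n : ℕ) (t u : ℤ) (ht1 : t ≠ 0) (ht2 : t.natAbs ≤ n)
    (hu1 : u ≠ 0) (hu2 : u.natAbs ≤ n) (h : t < u) : posOf n t < posOf n u := by
  unfold posOf; split <;> split <;> omega

lemma tOf_lt (n p q : ℕ) (h1 : 1 ≤ p) (h2 : q ≤ 2 * n) (h : p < q) : tOf n p < tOf n q := by
  unfold tOf; split <;> split <;> omega

lemma sp_apply (n : ℕ) (w : Equiv.Perm ℤ) (hw : IsSignedPerm n w) (s : ℤ)
    (hs1 : s ≠ 0) (hs2 : s.natAbs ≤ n) : w s ≠ 0 ∧ (w s).natAbs ≤ n := by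
  rcases lt_trichotomy s 0 with h | h | h
  · have hns : (1 : ℤ) ≤ -s ∧ -s ≤ n := by omega
    have := hw.2 (-s) hns.1 hns.2
    rw [hw.1, Int.abs_eq_natAbs] at this
    omega
  · omega
  · have hns : (1 : ℤ) ≤ s ∧ s ≤ n := by omega
    have := hw.2 s hns.1 hns.2
    rw [Int.abs_eq_natAbs] at this
    omega

lemma sp_symm (n : ℕ) (w : Equiv.Perm ℤ) (hw : IsSignedPerm n w) : IsSignedPerm n w.symm := by
  constructor
  · intro i
    apply w.injective
    rw [Equiv.apply_symm_apply, hw.1, Equiv.apply_symm_apply]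
  · intro i h1 h2
    classical
    set A : Finset ℤ := (Finset.Icc (-(n : ℤ)) n).erase 0 with hA
    have hmap : ∀ x ∈ A, w x ∈ A := by
      intro x hx
      simp only [hA, Finset.mem_erase, Finset.mem_Icc] at hx ⊢
      have := sp_apply n w hw x hx.1 (by omega)
      omega
    have hsub : A.image w ⊆ A := by
      intro y hy
      obtain ⟨x, hx, rfl⟩ := Finset.mem_image.mp hy
      exact hmap x hx
    have hcard : A.card ≤ (A.image w).card := by
      rw [Finset.card_image_of_injective _ w.injective]
    have himg : A.image w = A := Finset.eq_of_subset_of_card_le hsub hcard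
    have hiA : i ∈ A := by
      simp only [hA, Finset.mem_erase, Finset.mem_Icc]; omega
    rw [← himg] at hiA
    obtain ⟨x, hx, hwx⟩ := Finset.mem_image.mp hiA
    have : w.symm i = x := by rw [← hwx, Equiv.symm_apply_apply]
    rw [this, Int.abs_eq_natAbs]
    simp only [hA, Finset.mem_erase, Finset.mem_Icc] at hx
    omega




/-- `E(c) = sign(c) ε_{n+1-|c|}` -/
def Efun (n : ℕ) (c : ℤ) : ℕ → ℝ := fun m => if m = n + 1 - c.natAbs then (c.sign : ℝ) else 0

def Ediff (n : ℕ) (c d : ℤ) : ℕ → ℝ := Efun n c - Efun n d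

/-- the odd weakly increasing step function `M` -/
def Mz (n : ℕ) (μ : ℕ → ℤ) (s : ℤ) : ℤ := - s.sign * μ (n + 1 - s.natAbs)

lemma Mz_neg (n : ℕ) (μ : ℕ → ℤ) (s : ℤ) : Mz n μ (-s) = - Mz n μ s := by
  unfold Mz; rw [Int.sign_neg, Int.natAbs_neg]; ring

lemma Efun_neg (n : ℕ) (c : ℤ) : Efun n (-c) = - Efun n c := by
  funext m
  unfold Efun
  show (if m = n + 1 - (-c).natAbs then (((-c).sign : ℤ) : ℝ) else 0) = _
  rw [Int.sign_neg, Int.natAbs_neg, Pi.neg_apply]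
  show _ = -(if m = n + 1 - c.natAbs then ((c.sign : ℤ) : ℝ) else 0)
  split <;> push_cast <;> ring

lemma act_sub (n : ℕ) (w : Equiv.Perm ℤ) (f g : ℕ → ℝ) :
    act n w (f - g) = act n w f - act n w g := by
  funext m
  show _ = (_ : ℝ) - _
  unfold act
  rw [← Finset.sum_sub_distrib]
  apply Finset.sum_congr rfl
  intro k _
  simp only [Pi.sub_apply]
  split <;> ring

lemma act_Efun (n : ℕ) (w : Equiv.Perm ℤ) (hodd : ∀ i : ℤ, w (-i) = -w i)
    (c : ℤ) (hc1 : c ≠ 0) (hc2 : c.natAbs ≤ n) :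
    act n w (Efun n c) = Efun n (w c) := by
  funext m
  unfold act Efun
  rw [Finset.sum_eq_single_of_mem c.natAbs (by simp only [Finset.mem_Icc]; omega)]
  · have habs : (w (c.natAbs : ℤ)).natAbs = (w c).natAbs ∧
        ((w (c.natAbs : ℤ)).sign : ℝ) * (c.sign : ℝ) = ((w c).sign : ℝ) := by
      rcases lt_trichotomy c 0 with h | h | h
      · have h1 : ((c.natAbs : ℤ)) = -c := by omega
        rw [h1, hodd, Int.natAbs_neg, Int.sign_neg,
          Int.sign_eq_neg_one_of_neg h]
        constructor
        · rfl
        · push_cast; ring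
      · omega
      · have h1 : ((c.natAbs : ℤ)) = c := by omega
        rw [h1, Int.sign_eq_one_of_pos h]
        constructor
        · rfl
        · push_cast; ring
    rw [if_pos rfl, habs.1]
    by_cases hm : m = n + 1 - (w c).natAbs
    · rw [if_pos hm.symm, if_pos hm, habs.2]
    · rw [if_neg (fun h => hm h.symm), if_neg hm]
  · intro k hk hkne
    rw [Finset.mem_Icc] at hk
    have h0 : (if n + 1 - k = n + 1 - c.natAbs then ((c.sign : ℤ) : ℝ) else 0) = 0 :=
      if_neg (by omega)
    rw [h0, mul_zero, ite_self]

lemma formR_sub (n : ℕ) (x f g : ℕ → ℝ) :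
    formR n x (f - g) = formR n x f - formR n x g := by
  unfold formR
  rw [← Finset.sum_sub_distrib]
  apply Finset.sum_congr rfl
  intro m _
  simp only [Pi.sub_apply]; ring

lemma formR_Efun (n : ℕ) (x : ℕ → ℝ) (c : ℤ) (hc1 : c ≠ 0) (hc2 : c.natAbs ≤ n) :
    formR n x (Efun n c) = (c.sign : ℝ) * x (n + 1 - c.natAbs) := by
  unfold formR Efun
  rw [Finset.sum_eq_single_of_mem (n + 1 - c.natAbs) (by simp only [Finset.mem_Icc]; omega)]
  · rw [if_pos rfl]; ring
  · intro k hk hkne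
    rw [if_neg hkne, mul_zero]

section
variable (n : ℕ) (w : Equiv.Perm ℤ) (μ : ℕ → ℤ)

lemma mu_mono (hmono : ∀ i, 1 ≤ i → i < n → μ i ≤ μ (i + 1)) :
    ∀ j i, 1 ≤ i → i ≤ j → j ≤ n → μ i ≤ μ j := by
  intro j
  induction j with
  | zero => intro i h1 h2 h3; omega
  | succ j ih =>
    intro i h1 h2 h3
    rcases Nat.eq_or_lt_of_le h2 with h | h
    · rw [h]
    · exact le_trans (ih i h1 (by omega) (by omega)) (hmono j (by omega) (by omega))

lemma mu_nonpos (hmono : ∀ i, 1 ≤ i → i < n → μ i ≤ μ (i + 1)) (hneg : μ n ≤ 0)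
    (i : ℕ) (h1 : 1 ≤ i) (h2 : i ≤ n) : μ i ≤ 0 :=
  le_trans (mu_mono n μ hmono n i h1 h2 le_rfl) hneg

lemma Mz_mono (hmono : ∀ i, 1 ≤ i → i < n → μ i ≤ μ (i + 1)) (hneg : μ n ≤ 0)
    (s t : ℤ) (hs1 : s ≠ 0) (hs2 : s.natAbs ≤ n) (ht1 : t ≠ 0) (ht2 : t.natAbs ≤ n)
    (hst : s < t) : Mz n μ s ≤ Mz n μ t := by
  unfold Mz
  rcases lt_trichotomy s 0 with hs | hs | hs
  · rcases lt_trichotomy t 0 with ht | ht | ht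
    · rw [Int.sign_eq_neg_one_of_neg hs, Int.sign_eq_neg_one_of_neg ht]
      simp only [neg_neg, one_mul]
      exact mu_mono n μ hmono (n + 1 - t.natAbs) (n + 1 - s.natAbs) (by omega) (by omega)
        (by omega)
    · omega
    · rw [Int.sign_eq_neg_one_of_neg hs, Int.sign_eq_one_of_pos ht]
      have h1 := mu_nonpos n μ hmono hneg (n + 1 - s.natAbs) (by omega) (by omega)
      have h2 := mu_nonpos n μ hmono hneg (n + 1 - t.natAbs) (by omega) (by omega)
      omega
  · omega
  · rw [Int.sign_eq_one_of_pos hs, Int.sign_eq_one_of_pos (by omega : (0:ℤ) < t)]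
    have := mu_mono n μ hmono (n + 1 - s.natAbs) (n + 1 - t.natAbs) (by omega) (by omega)
      (by omega)
    omega

variable (hw : IsSignedPerm n w) (lam : ℕ → ℝ)
  (hlam : lam = act n w (fun i => (μ i : ℝ)))

include hw hlam in
lemma lam_val (s : ℤ) (hs1 : s ≠ 0) (hs2 : s.natAbs ≤ n) :
    lam (n + 1 - (w s).natAbs) = ((-(w s).sign * Mz n μ s : ℤ) : ℝ) := by
  subst hlam
  unfold act
  rw [Finset.sum_eq_single_of_mem s.natAbs (by simp only [Finset.mem_Icc]; omega)]
  · rcases lt_trichotomy s 0 with h | h | h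
    · have h1 : ((s.natAbs : ℤ)) = -s := by omega
      rw [h1, hw.1, Int.natAbs_neg, if_pos rfl, Int.sign_neg]
      unfold Mz
      rw [Int.sign_eq_neg_one_of_neg h]
      push_cast
      ring_nf
    · omega
    · have h1 : ((s.natAbs : ℤ)) = s := by omega
      rw [h1, if_pos rfl]
      unfold Mz
      rw [Int.sign_eq_one_of_pos h]
      push_cast
      ring_nf
  · intro k hk hkne
    rw [Finset.mem_Icc] at hk
    have hwk := sp_apply n w hw k (by omega) (by omega)
    have hws := sp_apply n w hw s hs1 hs2
    rw [if_neg]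
    intro hcond
    have habs : (w (k : ℤ)).natAbs = (w s).natAbs := by omega
    rcases Int.natAbs_eq_natAbs_iff.mp habs with h | h
    · have : (k : ℤ) = s := w.injective h
      omega
    · rw [← hw.1] at h
      have : (k : ℤ) = -s := w.injective h
      omega

include hw hlam in
lemma formR_lam_Efun (c : ℤ) (hc1 : c ≠ 0) (hc2 : c.natAbs ≤ n) :
    formR n lam (Efun n c) = ((- Mz n μ (w.symm c) : ℤ) : ℝ) := by
  have hsc := sp_apply n w.symm (sp_symm n w hw) c hc1 hc2
  have hv := lam_val n w μ hw lam hlam (w.symm c) hsc.1 hsc.2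
  rw [Equiv.apply_symm_apply] at hv
  rw [formR_Efun n lam c hc1 hc2, hv]
  have hss : (c.sign : ℝ) * (c.sign : ℝ) = 1 := by
    rcases lt_trichotomy c 0 with h | h | h
    · rw [Int.sign_eq_neg_one_of_neg h]; norm_num
    · omega
    · rw [Int.sign_eq_one_of_pos h]; norm_num
  push_cast
  calc (c.sign : ℝ) * (-(c.sign : ℝ) * (Mz n μ (w.symm c) : ℝ))
      = ((c.sign : ℝ) * (c.sign : ℝ)) * (-(Mz n μ (w.symm c) : ℝ)) := by ring
    _ = -(Mz n μ (w.symm c) : ℝ) := by rw [hss]; ring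

include hw hlam in
lemma formR_lam_Ediff (c d : ℤ) (hc1 : c ≠ 0) (hc2 : c.natAbs ≤ n)
    (hd1 : d ≠ 0) (hd2 : d.natAbs ≤ n) :
    formR n lam (Ediff n c d) = ((Mz n μ (w.symm d) - Mz n μ (w.symm c) : ℤ) : ℝ) := by
  unfold Ediff
  rw [formR_sub, formR_lam_Efun n w μ hw lam hlam c hc1 hc2,
    formR_lam_Efun n w μ hw lam hlam d hd1 hd2]
  push_cast
  ring

end





lemma Efun_pos (n : ℕ) (c : ℤ) (h : 0 < c) : Efun n c = eps (n + 1 - c.natAbs) := by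
  funext m
  unfold Efun eps
  rw [Int.sign_eq_one_of_pos h]
  split <;> norm_num

lemma Efun_negc (n : ℕ) (c : ℤ) (h : c < 0) : Efun n c = -eps (n + 1 - c.natAbs) := by
  funext m
  unfold Efun eps
  rw [Int.sign_eq_neg_one_of_neg h, Pi.neg_apply]
  split <;> norm_num

lemma Ediff_mem_pairs (n : ℕ) (a b : ℤ) (ha1 : a ≠ 0) (ha2 : a.natAbs ≤ n)
    (hb1 : b ≠ 0) (hb2 : b.natAbs ≤ n) (hba : b < a) (hne : b ≠ -a) :
    Ediff n a b ∈ {α : ℕ → ℝ | ∃ i j, 1 ≤ i ∧ i < j ∧ j ≤ n ∧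
      (α = eps i - eps j ∨ α = eps i + eps j)} := by
  have hne' : a.natAbs ≠ b.natAbs := by
    intro h
    rcases Int.natAbs_eq_natAbs_iff.mp h with h' | h' <;> omega
  rcases lt_trichotomy b 0 with hb | hb | hb
  · rcases lt_trichotomy a 0 with ha | ha | ha
    · -- b < a < 0
      refine ⟨n + 1 - b.natAbs, n + 1 - a.natAbs, by omega, by omega, by omega, Or.inl ?_⟩
      unfold Ediff
      rw [Efun_negc n a ha, Efun_negc n b hb]
      funext m
      simp only [Pi.sub_apply, Pi.neg_apply]
      ring
    · omega
    · -- b < 0 < a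
      rcases lt_or_gt_of_ne hne' with h | h
      · -- a.natAbs < b.natAbs : i = n+1-b.natAbs bigger? no: n+1-b.natAbs < n+1-a.natAbs
        refine ⟨n + 1 - b.natAbs, n + 1 - a.natAbs, by omega, by omega, by omega, Or.inr ?_⟩
        unfold Ediff
        rw [Efun_pos n a ha, Efun_negc n b hb, sub_neg_eq_add]
        exact add_comm _ _
      · refine ⟨n + 1 - a.natAbs, n + 1 - b.natAbs, by omega, by omega, by omega, Or.inr ?_⟩
        unfold Ediff
        rw [Efun_pos n a ha, Efun_negc n b hb, sub_neg_eq_add]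
  · omega
  · -- 0 < b < a
    refine ⟨n + 1 - a.natAbs, n + 1 - b.natAbs, by omega, by omega, by omega, Or.inl ?_⟩
    unfold Ediff
    rw [Efun_pos n a (by omega), Efun_pos n b hb]

lemma Ediff_mem_PosB (n : ℕ) (a b : ℤ) (ha1 : a ≠ 0) (ha2 : a.natAbs ≤ n)
    (hb1 : b ≠ 0) (hb2 : b.natAbs ≤ n) (hba : b < a) (hne : b ≠ -a) :
    Ediff n a b ∈ PosB n :=
  Set.mem_union_left _ (Ediff_mem_pairs n a b ha1 ha2 hb1 hb2 hba hne)

lemma Ediff_mem_PosC (n : ℕ) (a b : ℤ) (ha1 : a ≠ 0) (ha2 : a.natAbs ≤ n)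
    (hb1 : b ≠ 0) (hb2 : b.natAbs ≤ n) (hba : b < a) :
    Ediff n a b ∈ PosC n := by
  by_cases hne : b = -a
  · subst hne
    have ha : 0 < a := by omega
    refine Set.mem_union_right _ ⟨n + 1 - a.natAbs, by omega, by omega, ?_⟩
    unfold Ediff
    rw [Efun_neg, sub_neg_eq_add, Efun_pos n a ha, two_smul]
  · exact Set.mem_union_left _ (Ediff_mem_pairs n a b ha1 ha2 hb1 hb2 hba hne)

lemma Efun_mem_PosB (n : ℕ) (a : ℤ) (ha0 : 0 < a) (ha2 : a.natAbs ≤ n) :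
    Efun n a ∈ PosB n :=
  Set.mem_union_right _ ⟨n + 1 - a.natAbs, by omega, by omega, Efun_pos n a ha0⟩

lemma preMinus_eq (n : ℕ) (u : Equiv.Perm ℤ) (hodd : ∀ i : ℤ, u (-i) = -u i)
    (p : ℕ) (h1 : 1 ≤ p) (h2 : p ≤ 2 * n) :
    preMinus n (fun j => u (j : ℤ)) p = u (tOf n p) := by
  unfold preMinus tOf
  split
  · have hc : ((n + 1 - p : ℕ) : ℤ) = -(((p : ℤ) - n - 1)) := by omega
    show -u ((n + 1 - p : ℕ) : ℤ) = _
    rw [hc, hodd]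
    ring
  · have hc : ((p - n : ℕ) : ℤ) = (p : ℤ) - n := by omega
    show u ((p - n : ℕ) : ℤ) = _
    rw [hc]

section
variable (n : ℕ) (w : Equiv.Perm ℤ) (μ : ℕ → ℤ) (hw : IsSignedPerm n w) (lam : ℕ → ℝ)
  (hlam : lam = act n w (fun i => (μ i : ℝ)))

include hw hlam in
lemma supMinus_eq (p : ℕ) (h1 : 1 ≤ p) (h2 : p ≤ 2 * n) :
    supMinus n lam p = ((Mz n μ (w.symm (tOf n p)) : ℤ) : ℝ) := by
  have ht1 := tOf_ne n p h1 h2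
  have ht2 := tOf_natAbs n p h1 h2
  have hs := sp_apply n w.symm (sp_symm n w hw) (tOf n p) ht1 ht2
  have hv := lam_val n w μ hw lam hlam (w.symm (tOf n p)) hs.1 hs.2
  rw [Equiv.apply_symm_apply] at hv
  unfold supMinus
  split
  · have hneg : tOf n p < 0 := by unfold tOf; split <;> omega
    have hidx : n + 1 - (tOf n p).natAbs = p := by unfold tOf; split <;> omega
    rw [hidx] at hv
    rw [hv, Int.sign_eq_neg_one_of_neg hneg]
    push_cast; ring
  · have hpos : 0 < tOf n p := by unfold tOf; split <;> omega
    have hidx : n + 1 - (tOf n p).natAbs = 2 * n + 1 - p := by unfold tOf; split <;> omega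
    rw [hidx] at hv
    rw [hv, Int.sign_eq_one_of_pos hpos]
    push_cast; ring

include hw hlam in
lemma tiebreak (Φpos : Set (ℕ → ℝ)) (hΦ : Φpos = PosB n ∨ Φpos = PosC n)
    (hchamber : ∀ α ∈ Φpos,
      (0 < 2 * formR n lam α / formR n α α ↔ (-(act n w.symm α)) ∈ Φpos))
    (a b : ℤ) (ha1 : a ≠ 0) (ha2 : a.natAbs ≤ n) (hb1 : b ≠ 0) (hb2 : b.natAbs ≤ n)
    (hba : b < a) (hM : Mz n μ a = Mz n μ b) : w b < w a := by
  by_contra hcon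
  have hne : w b ≠ w a := fun h => absurd (w.injective h) (by omega)
  have hlt : w a < w b := (le_of_not_gt hcon).lt_of_ne (Ne.symm hne)
  have hwa := sp_apply n w hw a ha1 ha2
  have hwb := sp_apply n w hw b hb1 hb2
  have hform : formR n lam (Ediff n (w b) (w a)) = 0 := by
    rw [formR_lam_Ediff n w μ hw lam hlam (w b) (w a) hwb.1 hwb.2 hwa.1 hwa.2,
      Equiv.symm_apply_apply, Equiv.symm_apply_apply, hM, sub_self, Int.cast_zero]
  have hact : -(act n w.symm (Ediff n (w b) (w a))) = Ediff n a b := by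
    unfold Ediff
    rw [act_sub, act_Efun n w.symm (sp_symm n w hw).1 (w b) hwb.1 hwb.2,
      act_Efun n w.symm (sp_symm n w hw).1 (w a) hwa.1 hwa.2,
      Equiv.symm_apply_apply, Equiv.symm_apply_apply, neg_sub]
  rcases hΦ with h | h
  · subst h
    by_cases hab : b = -a
    · have hh : w b = -w a := by rw [hab, hw.1]
      have hwb0 : 0 < w b := by omega
      have hmem := hchamber (Efun n (w b)) (Efun_mem_PosB n (w b) hwb0 hwb.2)
      have hact2 : -(act n w.symm (Efun n (w b))) = Efun n a := by
        rw [act_Efun n w.symm (sp_symm n w hw).1 (w b) hwb.1 hwb.2, Equiv.symm_apply_apply,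
          show a = -b by omega, Efun_neg]
      rw [hact2] at hmem
      have h0 := hmem.mpr (Efun_mem_PosB n a (by omega) ha2)
      rw [formR_lam_Efun n w μ hw lam hlam (w b) hwb.1 hwb.2, Equiv.symm_apply_apply] at h0
      have hz : Mz n μ b = 0 := by
        have h2 := Mz_neg n μ a
        rw [← hab] at h2
        omega
      rw [hz] at h0
      norm_num at h0
    · have hdc : w a ≠ -(w b) := by
        intro h
        apply hab
        have h3 : w a = w (-b) := by rw [hw.1, ← h]
        have := w.injective h3
        omega
      have hmem := hchamber _ (Ediff_mem_PosB n (w b) (w a) hwb.1 hwb.2 hwa.1 hwa.2 hlt hdc)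
      rw [hact] at hmem
      have h0 := hmem.mpr (Ediff_mem_PosB n a b ha1 ha2 hb1 hb2 hba hab)
      rw [hform] at h0
      norm_num at h0
  · subst h
    have hmem := hchamber _ (Ediff_mem_PosC n (w b) (w a) hwb.1 hwb.2 hwa.1 hwa.2 hlt)
    rw [hact] at hmem
    have h0 := hmem.mpr (Ediff_mem_PosC n a b ha1 ha2 hb1 hb2 hba)
    rw [hform] at h0
    norm_num at h0

end


lemma greeneC_congr {α β : Type*} [LinearOrder α] [LinearOrder β] (N : ℕ) (x : ℕ → α)
    (y : ℕ → β) (h : ∀ i j, 1 ≤ i → i < j → j ≤ N → (x i ≤ x j ↔ y i ≤ y j)) (k : ℕ) :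
    greeneC N x k = greeneC N y k := by
  unfold greeneC
  congr 1
  ext m
  constructor
  · rintro ⟨S, hS, hm, f, hf⟩
    exact ⟨S, hS, hm, f, fun i hi j hj hij hfij =>
      (h i j (hS i hi).1 hij (hS j hj).2).mp (hf i hi j hj hij hfij)⟩
  · rintro ⟨S, hS, hm, f, hf⟩
    exact ⟨S, hS, hm, f, fun i hi j hj hij hfij =>
      (h i j (hS i hi).1 hij (hS j hj).2).mpr (hf i hi j hj hij hfij)⟩

lemma mem_step (n : ℕ) (u v : Equiv.Perm ℤ) (hu : IsSignedPerm n u) (hv : IsSignedPerm n v)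
    (hinv : ∀ t : ℤ, v (u t) = t) (k m : ℕ)
    (hm : ∃ S : Finset ℕ, (∀ i ∈ S, 1 ≤ i ∧ i ≤ 2 * n) ∧ m = S.card ∧
      ∃ f : ℕ → Fin k, ∀ i ∈ S, ∀ j ∈ S, i < j → f i = f j →
        preMinus n (fun q => u (q : ℤ)) i ≤ preMinus n (fun q => u (q : ℤ)) j) :
    ∃ S : Finset ℕ, (∀ i ∈ S, 1 ≤ i ∧ i ≤ 2 * n) ∧ m = S.card ∧
      ∃ f : ℕ → Fin k, ∀ i ∈ S, ∀ j ∈ S, i < j → f i = f j →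
        preMinus n (fun q => v (q : ℤ)) i ≤ preMinus n (fun q => v (q : ℤ)) j := by
  classical
  obtain ⟨S, hS, hm, f, hf⟩ := hm
  have hrng : ∀ p, 1 ≤ p → p ≤ 2 * n → u (tOf n p) ≠ 0 ∧ (u (tOf n p)).natAbs ≤ n :=
    fun p h1 h2 => sp_apply n u hu _ (tOf_ne n p h1 h2) (tOf_natAbs n p h1 h2)
  have hσmem : ∀ p, 1 ≤ p → p ≤ 2 * n →
      1 ≤ posOf n (u (tOf n p)) ∧ posOf n (u (tOf n p)) ≤ 2 * n :=
    fun p h1 h2 => posOf_mem n _ (hrng p h1 h2).1 (hrng p h1 h2).2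
  have hrec : ∀ p, 1 ≤ p → p ≤ 2 * n →
      posOf n (v (tOf n (posOf n (u (tOf n p))))) = p := by
    intro p h1 h2
    rw [tOf_posOf n _ (hrng p h1 h2).1 (hrng p h1 h2).2, hinv, posOf_tOf n p h1 h2]
  refine ⟨S.image (fun p => posOf n (u (tOf n p))), ?_, ?_,
    fun q => f (posOf n (v (tOf n q))), ?_⟩
  · intro p' hp'
    obtain ⟨p, hp, rfl⟩ := Finset.mem_image.mp hp'
    exact hσmem p (hS p hp).1 (hS p hp).2
  · rw [Finset.card_image_of_injOn]
    · exact hm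
    · intro p hp q hq heq
      have heq' : posOf n (u (tOf n p)) = posOf n (u (tOf n q)) := heq
      rw [← hrec p (hS p hp).1 (hS p hp).2, ← hrec q (hS q hq).1 (hS q hq).2, heq']
  · intro p' hp' q' hq' hlt hfeq
    obtain ⟨p, hp, rfl⟩ := Finset.mem_image.mp hp'
    obtain ⟨q, hq, rfl⟩ := Finset.mem_image.mp hq'
    have hp1 := (hS p hp).1
    have hp2 := (hS p hp).2
    have hq1 := (hS q hq).1
    have hq2 := (hS q hq).2
    have hlt' : posOf n (u (tOf n p)) < posOf n (u (tOf n q)) := hlt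
    have hfeq' : f (posOf n (v (tOf n (posOf n (u (tOf n p)))))) =
        f (posOf n (v (tOf n (posOf n (u (tOf n q)))))) := hfeq
    show preMinus n (fun r => v (r : ℤ)) (posOf n (u (tOf n p))) ≤
      preMinus n (fun r => v (r : ℤ)) (posOf n (u (tOf n q)))
    have hvp : preMinus n (fun r => v (r : ℤ)) (posOf n (u (tOf n p))) = tOf n p := by
      rw [preMinus_eq n v hv.1 _ (hσmem p hp1 hp2).1 (hσmem p hp1 hp2).2,
        tOf_posOf n _ (hrng p hp1 hp2).1 (hrng p hp1 hp2).2, hinv]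
    have hvq : preMinus n (fun r => v (r : ℤ)) (posOf n (u (tOf n q))) = tOf n q := by
      rw [preMinus_eq n v hv.1 _ (hσmem q hq1 hq2).1 (hσmem q hq1 hq2).2,
        tOf_posOf n _ (hrng q hq1 hq2).1 (hrng q hq1 hq2).2, hinv]
    rw [hvp, hvq]
    rw [hrec p hp1 hp2, hrec q hq1 hq2] at hfeq' 
    have hult : u (tOf n p) < u (tOf n q) := by
      rcases lt_trichotomy (u (tOf n p)) (u (tOf n q)) with h | h | h
      · exact h
      · exfalso
        rw [h] at hlt'
        exact lt_irrefl _ hlt' 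
      · exfalso
        have := posOf_lt n _ _ (hrng q hq1 hq2).1 (hrng q hq1 hq2).2
          (hrng p hp1 hp2).1 (hrng p hp1 hp2).2 h
        omega
    by_contra hc
    push_neg at hc
    have hne : p ≠ q := by
      intro h
      subst h
      exact lt_irrefl _ hc
    have hqp : q < p := by
      rcases lt_trichotomy p q with h | h | h
      · have := tOf_lt n p q hp1 hq2 h
        omega
      · exact absurd h hne
      · exact h
    have hle := hf q hq p hp hqp hfeq'.symm
    rw [preMinus_eq n u hu.1 q hq1 hq2, preMinus_eq n u hu.1 p hp1 hp2] at hle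
    omega

lemma greeneC_inv (n : ℕ) (w : Equiv.Perm ℤ) (hw : IsSignedPerm n w) (k : ℕ) :
    greeneC (2 * n) (preMinus n (fun q => w.symm (q : ℤ))) k =
      greeneC (2 * n) (preMinus n (fun q => w (q : ℤ))) k := by
  unfold greeneC
  congr 1
  ext m
  constructor
  · exact mem_step n w.symm w (sp_symm n w hw) hw (fun t => w.apply_symm_apply t) k m
  · exact mem_step n w w.symm hw (sp_symm n w hw) (fun t => w.symm_apply_apply t) k m


section
variable (n : ℕ) (w : Equiv.Perm ℤ) (μ : ℕ → ℤ) (hw : IsSignedPerm n w) (lam : ℕ → ℝ)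
  (hlam : lam = act n w (fun i => (μ i : ℝ)))

include hw hlam in
lemma pattern_equiv (hmono : ∀ i, 1 ≤ i → i < n → μ i ≤ μ (i + 1)) (hneg : μ n ≤ 0)
    (Φpos : Set (ℕ → ℝ)) (hΦ : Φpos = PosB n ∨ Φpos = PosC n)
    (hchamber : ∀ α ∈ Φpos,
      (0 < 2 * formR n lam α / formR n α α ↔ (-(act n w.symm α)) ∈ Φpos)) :
    ∀ p q, 1 ≤ p → p < q → q ≤ 2 * n →
      (supMinus n lam p ≤ supMinus n lam q ↔
        preMinus n (fun r => w.symm (r : ℤ)) p ≤ preMinus n (fun r => w.symm (r : ℤ)) q) := by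
  intro p q h1 hlt h2
  have hp2 : p ≤ 2 * n := by omega
  have hq1 : 1 ≤ q := by omega
  rw [supMinus_eq n w μ hw lam hlam p h1 hp2, supMinus_eq n w μ hw lam hlam q hq1 h2,
    preMinus_eq n w.symm (sp_symm n w hw).1 p h1 hp2,
    preMinus_eq n w.symm (sp_symm n w hw).1 q hq1 h2, Int.cast_le]
  have ha := sp_apply n w.symm (sp_symm n w hw) (tOf n p) (tOf_ne n p h1 hp2)
    (tOf_natAbs n p h1 hp2)
  have hb := sp_apply n w.symm (sp_symm n w hw) (tOf n q) (tOf_ne n q hq1 h2)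
    (tOf_natAbs n q hq1 h2)
  have htlt : tOf n p < tOf n q := tOf_lt n p q h1 h2 hlt
  have habne : w.symm (tOf n p) ≠ w.symm (tOf n q) := by
    intro h
    have := w.symm.injective h
    omega
  constructor
  · intro hM
    by_contra hc
    push_neg at hc
    have hclt : w.symm (tOf n q) < w.symm (tOf n p) := hc
    have hM2 := Mz_mono n μ hmono hneg _ _ hb.1 hb.2 ha.1 ha.2 hclt
    have heq : Mz n μ (w.symm (tOf n p)) = Mz n μ (w.symm (tOf n q)) := le_antisymm hM hM2
    have htb := tiebreak n w μ hw lam hlam Φpos hΦ hchamber _ _ ha.1 ha.2 hb.1 hb.2 hclt heq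
    rw [Equiv.apply_symm_apply, Equiv.apply_symm_apply] at htb
    omega
  · intro hab2
    exact Mz_mono n μ hmono hneg _ _ ha.1 ha.2 hb.1 hb.2 (lt_of_le_of_ne hab2 habne)

end


/-- for `Φ = B_n` or `C_n`, an integral antidominant weight `μ`,
`w ∈ W_n` and `λ = wμ` such that for every `α ∈ Φ⁺`, `⟨λ,α∨⟩ > 0 ↔ w⁻¹α ∈ −Φ⁺`,
the Robinson–Schensted shapes satisfy `p(λ⁻) = p(⁻w⃗)`. -/
theorem shape_lambda_eq_shape_w_typeBC (n : ℕ) (w : Equiv.Perm ℤ) (hw : IsSignedPerm n w)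
    (Φpos : Set (ℕ → ℝ)) (hΦ : Φpos = PosB n ∨ Φpos = PosC n)
    (μ : ℕ → ℤ)
    (hmono : ∀ i, 1 ≤ i → i < n → μ i ≤ μ (i + 1))
    (hneg : μ n ≤ 0)
    (lam : ℕ → ℝ) (hlam : lam = act n w (fun i => (μ i : ℝ)))
    (hchamber : ∀ α ∈ Φpos,
      (0 < 2 * formR n lam α / formR n α α ↔ (-(act n w.symm α)) ∈ Φpos)) :
    ∀ k, 1 ≤ k →
      rsShape (2 * n) (supMinus n lam) k =
        rsShape (2 * n) (preMinus n (fun j => w (j : ℤ))) k := by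
  have hkey : ∀ k, greeneC (2 * n) (supMinus n lam) k =
      greeneC (2 * n) (preMinus n (fun j => w (j : ℤ))) k := by
    intro k
    have h1 := greeneC_congr (2 * n) (supMinus n lam) (preMinus n (fun r => w.symm (r : ℤ)))
      (pattern_equiv n w μ hw lam hlam hmono hneg Φpos hΦ hchamber) k
    rw [h1, greeneC_inv n w hw k]
  intro k _
  unfold rsShape
  rw [hkey k, hkey (k - 1)]
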